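/- For every ε > 0, M > 0 and m ≥ 1 there exists δ > 0 with the following property. Let A be a real m×m matrix with trace zero such that |v·Av| < δ for a given unit vector v ∈ ℝ^m, ‖A‖ ≤ M, and the symmetrization A_sym = (A + Aᵀ)/2 is invertible with ‖A_sym^{-1}‖ ≤ M. Then there exists a vector p ∈ ℝ^m with ‖p − v‖ < ε and p·Ap = 0. -/

import Mathlib

set_option maxHeartbeats 1000000
set_option synthInstance.maxHeartbeats 200000


theorem stmt4 (ε M : ℝ) (hε : 0 < ε) (hM : 0 < M) (m : ℕ) (hm : 1 ≤ m) :
    ∃ δ : ℝ, 0 < δ ∧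
      ∀ (A : EuclideanSpace ℝ (Fin m) →L[ℝ] EuclideanSpace ℝ (Fin m))
        (v : EuclideanSpace ℝ (Fin m)),
        -- `A` has trace zero
        LinearMap.trace ℝ (EuclideanSpace ℝ (Fin m)) (↑A) = 0 →
        -- `v` is a unit vector with `|v · A v| < δ`
        ‖v‖ = 1 →
        |(inner ℝ v (A v) : ℝ)| < δ →
        -- operator norm bound on `A`
        ‖A‖ ≤ M →
        -- the symmetrization `A_sym = (A + Aᵀ)/2` is invertible with `‖A_sym⁻¹‖ ≤ M`
        Function.Bijective ((1/2 : ℝ) • (A + ContinuousLinearMap.adjoint A)) →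
        (∀ x, ‖x‖ ≤ M * ‖((1/2 : ℝ) • (A + ContinuousLinearMap.adjoint A)) x‖) →
        ∃ p : EuclideanSpace ℝ (Fin m), ‖p - v‖ < ε ∧ (inner ℝ p (A p) : ℝ) = 0 := by
  refine ⟨min (ε / (2 * M)) (1 / (2 * M ^ 3)), lt_min (by positivity) (by positivity), ?_⟩
  intro A v _htr hv hc hA _hbij hinv
  set δ : ℝ := min (ε / (2 * M)) (1 / (2 * M ^ 3)) with hδdef
  have hδpos : 0 < δ := lt_min (by positivity) (by positivity)
  have hδ1 : δ ≤ ε / (2 * M) := min_le_left _ _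
  have hδ2 : δ ≤ 1 / (2 * M ^ 3) := min_le_right _ _
  set S := ((1/2 : ℝ) • (A + ContinuousLinearMap.adjoint A)) with hS
  have hSv : 1 ≤ M * ‖S v‖ := by have := hinv v; rwa [hv] at this
  have hSv_pos : 0 < ‖S v‖ := by nlinarith [norm_nonneg (S v)]
  set w : EuclideanSpace ℝ (Fin m) := ‖S v‖⁻¹ • (S v) with hw
  have hwnorm : ‖w‖ = 1 := by
    rw [hw, norm_smul, norm_inv, norm_norm, inv_mul_cancel₀ hSv_pos.ne']
  set a : ℝ := inner ℝ w (A w) with ha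
  set b : ℝ := inner ℝ v (A w) + inner ℝ w (A v) with hb
  set c : ℝ := inner ℝ v (A v) with hcdef
  have hkey : b = 2 * ‖S v‖ := by
    have h1 : (inner ℝ w (S v) : ℝ) = ‖S v‖ := by
      rw [hw, real_inner_smul_left, real_inner_self_eq_norm_sq]
      field_simp
    have h2 : (inner ℝ w (S v) : ℝ) = (1/2) * (inner ℝ w (A v) + inner ℝ v (A w)) := by
      have hSapp : S v = (1/2 : ℝ) • (A v + ContinuousLinearMap.adjoint A v) := by
        simp [hS]
      rw [hSapp, real_inner_smul_right, inner_add_right]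
      have h3 : (inner ℝ w (ContinuousLinearMap.adjoint A v) : ℝ) = inner ℝ v (A w) := by
        rw [ContinuousLinearMap.adjoint_inner_right]
        exact real_inner_comm _ _
      rw [h3]
    rw [hb]; linarith
  have ha_bound : |a| ≤ M := by
    have h1 : |a| ≤ ‖w‖ * ‖A w‖ := abs_real_inner_le_norm _ _
    have h2 : ‖A w‖ ≤ ‖A‖ * ‖w‖ := A.le_opNorm w
    rw [hwnorm] at h1 h2
    nlinarith [norm_nonneg (A w)]
  have hc_bound : |c| < δ := hc
  set t : ℝ := M * δ with ht
  have htpos : 0 < t := by positivity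
  -- the quadratic
  set g : ℝ → ℝ := fun η => a * η ^ 2 + b * η + c with hg
  have hgc : Continuous g := by fun_prop
  have hMb : 2 ≤ M * b := by rw [hkey]; nlinarith
  have hbt : 2 * δ ≤ b * t := by
    rw [ht]
    nlinarith [mul_nonneg (by linarith : (0:ℝ) ≤ M * b - 2) hδpos.le]
  have hat : |a| * t ^ 2 ≤ δ / 2 := by
    have h1 : |a| * t ^ 2 ≤ M * t ^ 2 := by nlinarith [sq_nonneg t]
    have h2 : M * t ^ 2 = M ^ 3 * δ * δ := by rw [ht]; ring
    have h3 : M ^ 3 * δ ≤ 1 / 2 := by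
      rw [le_div_iff₀ (by positivity : (0:ℝ) < 2 * M ^ 3)] at hδ2
      linarith
    nlinarith
  have habs := abs_lt.mp hc_bound
  have haabs := abs_le.mp (le_refl |a|)
  have haa := neg_abs_le a
  have haa' := le_abs_self a
  have hgneg : g (-t) ≤ 0 := by
    have : a * (-t) ^ 2 ≤ |a| * t ^ 2 := by nlinarith [sq_nonneg t]
    simp only [hg]
    nlinarith
  have hgpos : 0 ≤ g t := by
    have : -(|a| * t ^ 2) ≤ a * t ^ 2 := by nlinarith [sq_nonneg t]
    simp only [hg]
    nlinarith
  have hmem : (0 : ℝ) ∈ Set.Icc (g (-t)) (g t) := ⟨hgneg, hgpos⟩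
  obtain ⟨η, hη, hgη⟩ := intermediate_value_Icc (by linarith : -t ≤ t) hgc.continuousOn hmem
  refine ⟨v + η • w, ?_, ?_⟩
  · have hηabs : |η| ≤ t := abs_le.mpr ⟨hη.1, hη.2⟩
    have : ‖v + η • w - v‖ = |η| := by
      simp [norm_smul, hwnorm]
    rw [this]
    have : t ≤ ε / 2 := by
      rw [ht]
      calc M * δ ≤ M * (ε / (2 * M)) := by nlinarith
      _ = ε / 2 := by field_simp
    linarith
  · have expand : (inner ℝ (v + η • w) (A (v + η • w)) : ℝ) = g η := by
      simp only [map_add, map_smul, inner_add_left, inner_add_right,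
        real_inner_smul_left, real_inner_smul_right, hg, ha, hb, hcdef]
      ring
    rw [expand, hgη]
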